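/- Let α ≥ 0 and β > -1 with α < β+1 and β ≤ 2α, let γ = β+1-α, and let Ω* = {(x,y): |x| < f(y), 0 < y < 1} with f(y) = ∫_y^1 t^γ/√(1-t^{2γ}) dt. Then the isoperimetric ratio R = P_α(Ω*) / (A_β(Ω*))^{(α+1)/(β+2)} equals γ^{(α+1)/(β+2) - 1} · ((β+1)(β+2)/(α+1))^{(α+1)/(β+2)} · B((α+1)/(2γ), 1/2)^{γ/(β+2)}, where P_α(Ω*) = (1/γ) B((α+1)/(2γ), 1/2) and A_β(Ω*) = (1/(γ(β+1))) B(1 + (α+1)/(2γ), 1/2). -/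

import Mathlib

/-- The real Beta function. -/
noncomputable def betaFn (a b : ℝ) : ℝ := ∫ t in (0:ℝ)..1, t^(a-1) * (1-t)^(b-1)

lemma betaFn_eq_Gamma {a b : ℝ} (ha : 0 < a) (hb : 0 < b) :
    betaFn a b = Real.Gamma a * Real.Gamma b / Real.Gamma (a+b) := by
  have hcast : ((betaFn a b : ℝ) : ℂ) = Complex.betaIntegral a b := by
    rw [betaFn, Complex.betaIntegral, ← intervalIntegral.integral_ofReal]
    refine intervalIntegral.integral_congr fun t ht => ?_
    rw [Set.uIcc_of_le (by norm_num : (0:ℝ) ≤ 1)] at ht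
    push_cast
    rw [Complex.ofReal_cpow ht.1 (a-1), Complex.ofReal_cpow (by linarith [ht.2] : (0:ℝ) ≤ 1-t) (b-1)]
    push_cast
    ring
  have hG := Complex.Gamma_mul_Gamma_eq_betaIntegral
    (s := (a:ℂ)) (t := (b:ℂ)) (by simpa using ha) (by simpa using hb)
  have hGab : Real.Gamma (a+b) ≠ 0 := (Real.Gamma_pos_of_pos (by linarith)).ne'
  have : ((Real.Gamma a * Real.Gamma b / Real.Gamma (a+b) : ℝ) : ℂ) = (betaFn a b : ℂ) := by
    rw [hcast]
    push_cast
    rw [← Complex.Gamma_ofReal, ← Complex.Gamma_ofReal, ← Complex.Gamma_ofReal]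
    have hGab' : Complex.Gamma ((a:ℂ)+(b:ℂ)) ≠ 0 := by
      rw [show ((a:ℂ)+(b:ℂ)) = ((a+b:ℝ):ℂ) by push_cast; ring, Complex.Gamma_ofReal]
      exact_mod_cast hGab
    rw [show ((a:ℂ)+(b:ℂ)) = ((a+b:ℝ):ℂ) by push_cast; ring] at hG
    field_simp at hG ⊢
    rw [div_eq_iff (by rw [Complex.Gamma_ofReal]; exact_mod_cast hGab)]
    push_cast at hG ⊢
    linear_combination hG
  exact_mod_cast this.symm

lemma betaFn_pos {a b : ℝ} (ha : 0 < a) (hb : 0 < b) : 0 < betaFn a b := by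
  rw [betaFn_eq_Gamma ha hb]
  exact div_pos (mul_pos (Real.Gamma_pos_of_pos ha) (Real.Gamma_pos_of_pos hb))
    (Real.Gamma_pos_of_pos (by linarith))

lemma betaFn_succ {a b : ℝ} (ha : 0 < a) (hb : 0 < b) :
    betaFn (1+a) b = betaFn a b * (a/(a+b)) := by
  rw [betaFn_eq_Gamma (by linarith) hb, betaFn_eq_Gamma ha hb,
    show (1:ℝ)+a = a+1 by ring, show a+1+b = (a+b)+1 by ring,
    Real.Gamma_add_one ha.ne', Real.Gamma_add_one (by positivity : a+b ≠ 0)]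
  have h1 := (Real.Gamma_pos_of_pos ha).ne'
  have h2 := (Real.Gamma_pos_of_pos (show (0:ℝ) < a+b by linarith)).ne'
  field_simp

theorem stmt19 (α β γ P A : ℝ) (hα : 0 ≤ α) (hβ : -1 < β) (h1 : α < β+1)
    (h2 : β ≤ 2*α) (hγ : γ = β+1-α)
    (hP : P = (1/γ) * betaFn ((α+1)/(2*γ)) (1/2))
    (hA : A = 1/(γ*(β+1)) * betaFn (1 + (α+1)/(2*γ)) (1/2)) :
    P / A^((α+1)/(β+2))
      = γ^((α+1)/(β+2) - 1) * ((β+1)*(β+2)/(α+1))^((α+1)/(β+2)) *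
        (betaFn ((α+1)/(2*γ)) (1/2))^(γ/(β+2)) := by
  have hγ0 : 0 < γ := by rw [hγ]; linarith
  have hα1 : 0 < α + 1 := by linarith
  have hβ1 : 0 < β + 1 := by linarith
  have hβ2 : 0 < β + 2 := by linarith
  set a : ℝ := (α+1)/(2*γ) with ha_def
  have ha : 0 < a := by positivity
  set B : ℝ := betaFn a (1/2) with hB_def
  have hB : 0 < B := betaFn_pos ha one_half_pos
  have hab : a + 1/2 = (β+2)/(2*γ) := by
    rw [ha_def]
    field_simp
    rw [hγ]; ring
  have hfrac : a / (a + 1/2) = (α+1)/(β+2) := by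
    rw [hab, ha_def, div_div_div_eq, mul_comm (α+1) (2*γ),
      mul_div_mul_left _ _ (by positivity : (2*γ) ≠ 0)]
  have hA' : A = B * ((α+1)/(γ*(β+1)*(β+2))) := by
    rw [hA, betaFn_succ ha one_half_pos, hfrac, ← hB_def]
    field_simp
  set e : ℝ := (α+1)/(β+2) with he_def
  have hkey : 1 - e = γ/(β+2) := by
    rw [he_def, hγ]; field_simp; ring
  set c : ℝ := (α+1)/(γ*(β+1)*(β+2)) with hc_def
  have hc : 0 < c := by positivity
  have hcg : (β+1)*(β+2)/(α+1) = (c*γ)⁻¹ := by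
    rw [hc_def]; field_simp
  rw [hP, hA', ← hkey, hcg, Real.mul_rpow hB.le hc.le,
    Real.inv_rpow (by positivity), Real.mul_rpow hc.le hγ0.le,
    Real.rpow_sub hγ0, Real.rpow_one, Real.rpow_sub hB, Real.rpow_one]
  have h1 : (0:ℝ) < c ^ e := Real.rpow_pos_of_pos hc e
  have h2 : (0:ℝ) < γ ^ e := Real.rpow_pos_of_pos hγ0 e
  have h3 : (0:ℝ) < B ^ e := Real.rpow_pos_of_pos hB e
  field_simp
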